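/- arXiv:1312.7493 — 2 statements merged into one kernel-verified Lean document; each statement's English description precedes it below -/
import Mathlib

section
/- Let C be a triangulated category endowed with a weight structure w and let i ∈ ℤ. Then C_{w≥i} = (C_{w≤i−1})^⊥, i.e., an object M of C belongs to C_{w≥i} if and only if Hom(X, M) = 0 for every X ∈ C_{w≤i−1}. -/
open CategoryTheory CategoryTheory.Limits CategoryTheory.Pretriangulated CategoryTheory.Category
open scoped ZeroObject

universe w v u

/-- `X` is a retract of `Y`: the identity of `X` factors through `Y`. -/
def IsRetract {D : Type*} [Category D] (X Y : D) : Prop :=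
  ∃ (i : X ⟶ Y) (r : Y ⟶ X), i ≫ r = 𝟙 X

/-- A weight structure on a triangulated category `C`. -/
structure WeightStructure (C : Type u) [Category.{v} C] [Preadditive C] [HasZeroObject C]
    [HasShift C ℤ] [∀ n : ℤ, (shiftFunctor C n).Additive] [Pretriangulated C] where
  /-- the class `C_{w≤0}` -/
  LE : Set C
  /-- the class `C_{w≥0}` -/
  GE : Set C
  le_retract : ∀ ⦃X Y : C⦄, IsRetract X Y → Y ∈ LE → X ∈ LE
  ge_retract : ∀ ⦃X Y : C⦄, IsRetract X Y → Y ∈ GE → X ∈ GE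
  le_shift : ∀ X : C, X ∈ LE → X⟦(-1 : ℤ)⟧ ∈ LE
  ge_shift : ∀ X : C, X ∈ GE → X⟦(1 : ℤ)⟧ ∈ GE
  orthogonal : ∀ ⦃X Y : C⦄, X ∈ LE → Y ∈ GE → ∀ f : X ⟶ Y⟦(1 : ℤ)⟧, f = 0
  exists_decomp : ∀ M : C, ∃ (B A : C) (f : B ⟶ M) (g : M ⟶ A) (h : A ⟶ B⟦(1 : ℤ)⟧),
    B ∈ LE ∧ A⟦(-1 : ℤ)⟧ ∈ GE ∧ Triangle.mk f g h ∈ distTriang C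

namespace WeightStructure

variable {C : Type u} [Category.{v} C] [Preadditive C] [HasZeroObject C]
  [HasShift C ℤ] [∀ n : ℤ, (shiftFunctor C n).Additive] [Pretriangulated C]

/-- the class `C_{w≤i} = C_{w≤0}[i]` -/
def leSet (w : WeightStructure C) (i : ℤ) : Set C := {X : C | X⟦-i⟧ ∈ w.LE}

/-- the class `C_{w≥i} = C_{w≥0}[i]` -/
def geSet (w : WeightStructure C) (i : ℤ) : Set C := {X : C | X⟦-i⟧ ∈ w.GE}

/-- the class `C_{w=i} = C_{w≤i} ∩ C_{w≥i}` -/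
def eqSet (w : WeightStructure C) (i : ℤ) : Set C := w.leSet i ∩ w.geSet i

end WeightStructure

variable {C : Type u} [Category.{v} C] [Preadditive C] [HasZeroObject C]
  [HasShift C ℤ] [∀ n : ℤ, (shiftFunctor C n).Additive] [Pretriangulated C]

lemma isRetract_of_iso {D : Type*} [Category D] {X Y : D} (e : X ≅ Y) : IsRetract X Y :=
  ⟨e.hom, e.inv, e.hom_inv_id⟩

lemma WeightStructure.le_iso (w : WeightStructure C) {X Y : C} (e : X ≅ Y) (hY : Y ∈ w.LE) :
    X ∈ w.LE := w.le_retract (isRetract_of_iso e) hY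

lemma WeightStructure.ge_iso (w : WeightStructure C) {X Y : C} (e : X ≅ Y) (hY : Y ∈ w.GE) :
    X ∈ w.GE := w.ge_retract (isRetract_of_iso e) hY

lemma WeightStructure.mem_ge_iff (w : WeightStructure C) (N : C) :
    N ∈ w.GE ↔ ∀ B ∈ w.LE, ∀ f : B ⟶ N⟦(1 : ℤ)⟧, f = 0 := by
  constructor
  · intro hN B hB f
    exact w.orthogonal hB hN f
  · intro h
    obtain ⟨B, A, f, g, hmap, hB, hA, hT⟩ := w.exists_decomp (N⟦(1 : ℤ)⟧)
    have hf : f = 0 := h B hB f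
    obtain ⟨r, hr⟩ := Triangle.yoneda_exact₂ _ hT (𝟙 (N⟦(1 : ℤ)⟧))
      (by rw [Triangle.mk_mor₁, hf]; exact zero_comp)
    have hretr : IsRetract ((N⟦(1 : ℤ)⟧)⟦(-1 : ℤ)⟧) (A⟦(-1 : ℤ)⟧) := by
      refine ⟨(shiftFunctor C (-1 : ℤ)).map g, (shiftFunctor C (-1 : ℤ)).map r, ?_⟩
      change 𝟙 _ = g ≫ r at hr
      refine (Functor.map_comp _ g r).symm.trans ((congrArg _ hr.symm).trans ?_)
      exact (shiftFunctor C (-1 : ℤ)).map_id _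
    have : (N⟦(1 : ℤ)⟧)⟦(-1 : ℤ)⟧ ∈ w.GE := w.ge_retract hretr hA
    exact w.ge_iso ((shiftFunctorCompIsoId C (1 : ℤ) (-1 : ℤ) (by ring)).app N).symm this

/-- Proposition 2.1.3(8): `C_{w≥i} = (C_{w≤i-1})^⊥`. -/
theorem geSet_eq_rightOrthogonal (w : WeightStructure C) (i : ℤ) (M : C) :
    M ∈ w.geSet i ↔ ∀ X ∈ w.leSet (i - 1), ∀ f : X ⟶ M, f = 0 := by
  have e : M⟦-(i - 1)⟧ ≅ (M⟦-i⟧)⟦(1 : ℤ)⟧ :=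
    (shiftFunctorAdd' C (-i) (1 : ℤ) (-(i - 1)) (by ring)).app M
  constructor
  · intro hM X hX f
    have h0 : (shiftFunctor C (-(i - 1))).map f ≫ e.hom = 0 := w.orthogonal hX hM _
    have h1 : (shiftFunctor C (-(i - 1))).map f = 0 := by
      have := h0 =≫ e.inv
      simpa using this
    apply (shiftFunctor C (-(i - 1))).map_injective
    rw [h1, Functor.map_zero]
  · intro h
    rw [WeightStructure.geSet, Set.mem_setOf_eq, w.mem_ge_iff]
    intro B hB g
    have hX : B⟦i - 1⟧ ∈ w.leSet (i - 1) :=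
      w.le_iso ((shiftFunctorCompIsoId C (i - 1) (-(i - 1)) (by ring)).app B) hB
    set u : (M⟦-(i - 1)⟧)⟦i - 1⟧ ≅ M :=
      (shiftFunctorCompIsoId C (-(i - 1)) (i - 1) (by ring)).app M with hu
    have h2 : (shiftFunctor C (i - 1)).map (g ≫ e.inv) ≫ u.hom = 0 := h _ hX _
    have h3 : (shiftFunctor C (i - 1)).map (g ≫ e.inv) = 0 := by
      have := h2 =≫ u.inv
      simpa using this
    have h4 : g ≫ e.inv = 0 := by
      apply (shiftFunctor C (i - 1)).map_injective
      rw [h3, Functor.map_zero]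
    have := h4 =≫ e.hom
    simpa using this
end

section
/- Let C be a triangulated category endowed with a weight structure w, and let M be a bounded object, i.e., M ∈ C^b := (∪_{i∈ℤ} C_{w≤i}) ∩ (∪_{i∈ℤ} C_{w≥i}). Then for any i ∈ ℤ, M belongs to C_{w≥i} if and only if Hom(X, M) = 0 for every j < i and every X ∈ C_{w=j}. -/
open CategoryTheory CategoryTheory.Limits CategoryTheory.Pretriangulated CategoryTheory.Category
open scoped ZeroObject

universe w v u

variable {C : Type u} [Category.{v} C] [Preadditive C] [HasZeroObject C]
  [HasShift C ℤ] [∀ n : ℤ, (shiftFunctor C n).Additive] [Pretriangulated C]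

namespace WeightStructure

variable (w : WeightStructure C)

lemma mem_LE_of_iso {X Y : C} (e : X ≅ Y) (hY : Y ∈ w.LE) : X ∈ w.LE :=
  w.le_retract ⟨e.hom, e.inv, e.hom_inv_id⟩ hY

lemma mem_GE_of_iso {X Y : C} (e : X ≅ Y) (hY : Y ∈ w.GE) : X ∈ w.GE :=
  w.ge_retract ⟨e.hom, e.inv, e.hom_inv_id⟩ hY

lemma ge_shift_int (X : C) (hX : X ∈ w.GE) (n : ℤ) (hn : 0 ≤ n) : X⟦n⟧ ∈ w.GE := by
  refine Int.le_induction (motive := fun k _ => X⟦k⟧ ∈ w.GE) ?_ ?_ n hn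
  · exact w.mem_GE_of_iso ((shiftFunctorZero C ℤ).app X) hX
  · intro n _ ih
    exact w.mem_GE_of_iso ((shiftFunctorAdd' C n 1 (n + 1) rfl).app X) (w.ge_shift _ ih)

lemma geSet_mono {M : C} {j k : ℤ} (hjk : j ≤ k) (hM : M ∈ w.geSet k) : M ∈ w.geSet j := by
  refine w.mem_GE_of_iso ((shiftFunctorAdd' C (-k) (k - j) (-j) (by ring)).app M)
    (w.ge_shift_int _ hM _ (by omega))

lemma geSet_retract {X Y : C} {k : ℤ} (h : IsRetract X Y) (hY : Y ∈ w.geSet k) :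
    X ∈ w.geSet k := by
  obtain ⟨i, r, hir⟩ := h
  exact w.ge_retract ⟨(shiftFunctor C (-k)).map i, (shiftFunctor C (-k)).map r,
    by rw [← Functor.map_comp, hir, CategoryTheory.Functor.map_id]⟩ hY

lemma geSet_shift_neg_one {A : C} {k : ℤ} (hA : A ∈ w.geSet (k + 1)) :
    A⟦(-1 : ℤ)⟧ ∈ w.geSet k := by
  exact w.mem_GE_of_iso (((shiftFunctorAdd' C (-1) (-k) (-(k + 1)) (by ring)).app A).symm) hA

/-- Orthogonality: there are no nonzero maps from `C_{w≤j}` to `C_{w≥k}` when `j < k`. -/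
lemma orthogonal' {X M : C} {j k : ℤ} (hX : X ∈ w.leSet j) (hM : M ∈ w.geSet k)
    (hjk : j < k) (f : X ⟶ M) : f = 0 := by
  apply (shiftFunctor C (-j)).map_injective
  rw [Functor.map_zero]
  have hY : M⟦-k⟧⟦k - j - 1⟧ ∈ w.GE := w.ge_shift_int _ hM _ (by omega)
  have e : M⟦-j⟧ ≅ (M⟦-k⟧⟦k - j - 1⟧)⟦(1 : ℤ)⟧ :=
    (shiftFunctorAdd' C (-k) (k - j) (-j) (by ring)).app M ≪≫
      (shiftFunctorAdd' C (k - j - 1) 1 (k - j) (by ring)).app (M⟦-k⟧)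
  have := w.orthogonal hX hY ((shiftFunctor C (-j)).map f ≫ e.hom)
  rw [← comp_id ((shiftFunctor C (-j)).map f), ← e.hom_inv_id, ← assoc, this, zero_comp]

/-- Weight decomposition at level `m`. -/
lemma exists_decomp' (M : C) (m : ℤ) :
    ∃ (B A : C) (f : B ⟶ M) (g : M ⟶ A) (h : A ⟶ B⟦(1 : ℤ)⟧),
      B ∈ w.leSet m ∧ A ∈ w.geSet (m + 1) ∧ Triangle.mk f g h ∈ distTriang C := by
  obtain ⟨B', A', f', g', h', hB', hA', hT'⟩ := w.exists_decomp (M⟦-m⟧)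
  let S := (CategoryTheory.shiftFunctor (Pretriangulated.Triangle C) m).obj
    (Triangle.mk f' g' h')
  have hS : S ∈ distTriang C := Triangle.shift_distinguished _ hT' m
  have e : (M⟦-m⟧)⟦m⟧ ≅ M := (shiftFunctorCompIsoId C (-m) m (by ring)).app M
  refine ⟨B'⟦m⟧, A'⟦m⟧, S.mor₁ ≫ e.hom, e.inv ≫ S.mor₂, S.mor₃,
    w.mem_LE_of_iso ((shiftFunctorCompIsoId C m (-m) (by ring)).app B') hB',
    w.mem_GE_of_iso (((shiftFunctorAdd' C m (-(m + 1)) (-1) (by ring)).app A').symm) hA', ?_⟩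
  refine isomorphic_distinguished _ hS _ ?_
  exact Triangle.isoMk _ _ (Iso.refl _) e.symm (Iso.refl _) (by exact (assoc _ _ _).trans ((congrArg (S.mor₁ ≫ ·) e.hom_inv_id).trans ((comp_id _).trans (id_comp _).symm))) (by exact comp_id _) (by exact (congrArg (S.mor₃ ≫ ·) ((shiftFunctor C (1 : ℤ)).map_id _)).trans ((comp_id _).trans (id_comp _).symm))

/-- `geSet` is closed under extensions. -/
lemma geSet_ext {T : Triangle C} (hT : T ∈ distTriang C) {k : ℤ}
    (h₁ : T.obj₁ ∈ w.geSet k) (h₃ : T.obj₃ ∈ w.geSet k) : T.obj₂ ∈ w.geSet k := by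
  -- first show that every map from `C_{w≤k-1}` to `T.obj₂` vanishes
  have hvan : ∀ (W : C), W ∈ w.leSet (k - 1) → ∀ (φ : W ⟶ T.obj₂), φ = 0 := by
    intro W hW φ
    have hφ₂ : φ ≫ T.mor₂ = 0 := w.orthogonal' hW h₃ (by omega) _
    obtain ⟨ψ, hψ⟩ := Triangle.coyoneda_exact₂ T hT φ hφ₂
    rw [hψ, w.orthogonal' hW h₁ (by omega) ψ, zero_comp]
  -- now use a weight decomposition of `T.obj₂` at level `k - 1`
  obtain ⟨B, A, f, g, h, hB, hA, hD⟩ := w.exists_decomp' T.obj₂ (k - 1)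
  have hf : f = 0 := hvan B hB f
  obtain ⟨r, hr⟩ := Triangle.yoneda_exact₂ _ hD (𝟙 T.obj₂) (by rw [hf]; exact zero_comp)
  have : T.obj₂ ∈ w.geSet (k - 1 + 1) := w.geSet_retract ⟨g, r, hr.symm⟩ hA
  simpa using this

end WeightStructure

/-- Proposition 2.1.3(19): a bounded object `M` belongs to `C_{w≥i}` if and only if
`C_{w=j} ⊥ M` for all `j < i`. -/
theorem bounded_geSet_iff_orthogonal (w : WeightStructure C) (M : C)
    (hbdd : (∃ i : ℤ, M ∈ w.leSet i) ∧ (∃ i : ℤ, M ∈ w.geSet i)) (i : ℤ) :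
    M ∈ w.geSet i ↔ ∀ j : ℤ, j < i → ∀ X ∈ w.eqSet j, ∀ f : X ⟶ M, f = 0 := by
  constructor
  · intro hM j hj X hX f
    exact w.orthogonal' hX.1 hM hj f
  · intro hortho
    obtain ⟨-, m, hm⟩ := hbdd
    by_cases hmi : i ≤ m
    · exact w.geSet_mono hmi hm
    · -- induct from level `m` up to level `i`
      have key : ∀ k : ℤ, m ≤ k → k ≤ i → M ∈ w.geSet k := by
        refine Int.le_induction (motive := fun k _ => k ≤ i → M ∈ w.geSet k) ?_ ?_
        · intro _; exact hm
        · intro k hk ih hki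
          have hMk : M ∈ w.geSet k := ih (by omega)
          obtain ⟨B, A, f, g, h, hB, hA, hD⟩ := w.exists_decomp' M k
          -- `B` lies in `C_{w=k}` : it is an extension of `M` by `A⟦-1⟧`
          have hBge : B ∈ w.geSet k := by
            have := inv_rot_of_distTriang _ hD
            exact w.geSet_ext this (w.geSet_shift_neg_one hA) hMk
          have hf : f = 0 := hortho k (by omega) B ⟨hB, hBge⟩ f
          obtain ⟨r, hr⟩ := Triangle.yoneda_exact₂ _ hD (𝟙 M) (by rw [hf]; exact zero_comp)
          exact w.geSet_retract ⟨g, r, hr.symm⟩ hA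
      exact key i (by omega) le_rfl
end
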